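/- Let m, j be integers with m ≥ 4 and 1 ≤ j < m/2. If 6 divides m and 3 does not divide j, then the generalized Pappus graph P(m, j, m/2) admits a neighborhood 3-balanced coloring; in fact ℓ(v_i) = ℓ(u_i) = ℓ(w_i) = i mod 3 is such a coloring. -/
import Mathlib

/-- A coloring `ℓ : V → ZMod 3` of a simple graph `G` is neighborhood 3-balanced if
every vertex has an equal number of neighbors of each of the three colors. -/
def NBalanced {V : Type*} (G : SimpleGraph V) (ℓ : V → ZMod 3) : Prop :=
  ∀ v : V, ∀ i j : ZMod 3,
    {w | G.Adj v w ∧ ℓ w = i}.ncard = {w | G.Adj v w ∧ ℓ w = j}.ncard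

/-- The generalized Pappus graph `P(m, j, k)`.  Vertices: `Sum.inl x` are the exterior
vertices `v_x`, `Sum.inr (Sum.inl x)` the middle vertices `u_x`, and
`Sum.inr (Sum.inr x)` the interior vertices `w_x`, for `x : ZMod m`.
Edges: `v_i v_{i+1}`, `v_i u_i`, `u_i w_{i+j}`, `u_i w_{i-j}`, and `w_i w_{i+k}`. -/
def genPappus (m j k : ℕ) : SimpleGraph (ZMod m ⊕ ZMod m ⊕ ZMod m) :=
  SimpleGraph.fromRel (fun a b =>
    match a, b with
    | Sum.inl x, Sum.inl y => y = x + 1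
    | Sum.inl x, Sum.inr (Sum.inl y) => y = x
    | Sum.inr (Sum.inl x), Sum.inr (Sum.inr y) =>
        y = x + (j : ZMod m) ∨ y = x - (j : ZMod m)
    | Sum.inr (Sum.inr x), Sum.inr (Sum.inr y) => y = x + (k : ZMod m)
    | _, _ => False)

lemma single_card {V : Type*} (G : SimpleGraph V) (ℓ : V → ZMod 3) (v a b c : V)
    (hset : ∀ w, G.Adj v w ↔ w = a ∨ w = b ∨ w = c)
    (hba : ℓ b ≠ ℓ a) (hca : ℓ c ≠ ℓ a) :
    {w | G.Adj v w ∧ ℓ w = ℓ a}.ncard = 1 := by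
  have : {w | G.Adj v w ∧ ℓ w = ℓ a} = {a} := by
    ext w
    simp only [Set.mem_setOf_eq, Set.mem_singleton_iff, hset]
    constructor
    · rintro ⟨rfl | rfl | rfl, h2⟩
      · rfl
      · exact absurd h2 hba
      · exact absurd h2 hca
    · rintro rfl; exact ⟨Or.inl rfl, rfl⟩
  rw [this, Set.ncard_singleton]

lemma key_balanced {V : Type*} (G : SimpleGraph V) (ℓ : V → ZMod 3) (v a b c : V)
    (hset : ∀ w, G.Adj v w ↔ w = a ∨ w = b ∨ w = c)
    (hab : ℓ a ≠ ℓ b) (hac : ℓ a ≠ ℓ c) (hbc : ℓ b ≠ ℓ c) :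
    ∀ i i' : ZMod 3,
      {w | G.Adj v w ∧ ℓ w = i}.ncard = {w | G.Adj v w ∧ ℓ w = i'}.ncard := by
  have tri : ∀ x p q r : ZMod 3, p ≠ q → p ≠ r → q ≠ r → x = p ∨ x = q ∨ x = r := by decide
  have h1 : ∀ i : ZMod 3, {w | G.Adj v w ∧ ℓ w = i}.ncard = 1 := by
    intro i
    rcases tri i (ℓ a) (ℓ b) (ℓ c) hab hac hbc with rfl | rfl | rfl
    · exact single_card G ℓ v a b c hset (Ne.symm hab) (Ne.symm hac)
    · exact single_card G ℓ v b a c (fun w => (hset w).trans (by tauto)) hab (Ne.symm hbc)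
    · exact single_card G ℓ v c a b (fun w => (hset w).trans (by tauto)) hac hbc
  intro i i'; rw [h1, h1]

theorem stmt9 (m j : ℕ) (hm : 4 ≤ m) (hj1 : 1 ≤ j) (hj2 : 2 * j < m)
    (h6m : 6 ∣ m) (h3j : ¬ 3 ∣ j) :
    (∃ ℓ, NBalanced (genPappus m j (m / 2)) ℓ) ∧
      NBalanced (genPappus m j (m / 2))
        (fun a => match a with
          | Sum.inl x => (x.val : ZMod 3)
          | Sum.inr (Sum.inl x) => (x.val : ZMod 3)
          | Sum.inr (Sum.inr x) => (x.val : ZMod 3)) := by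
  haveI : NeZero m := ⟨by omega⟩
  have h3m : 3 ∣ m := dvd_trans ⟨2, rfl⟩ h6m
  set k : ℕ := m / 2 with hk
  set ℓ : (ZMod m ⊕ ZMod m ⊕ ZMod m) → ZMod 3 :=
    (fun a => match a with
      | Sum.inl x => (x.val : ZMod 3)
      | Sum.inr (Sum.inl x) => (x.val : ZMod 3)
      | Sum.inr (Sum.inr x) => (x.val : ZMod 3)) with hℓ
  suffices h : NBalanced (genPappus m j k) ℓ by exact ⟨⟨ℓ, h⟩, h⟩
  set φ : ZMod m →+* ZMod 3 := ZMod.castHom h3m (ZMod 3) with hφ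
  have val3 : ∀ y : ZMod m, ((y.val : ZMod 3)) = φ y := fun y =>
    (ZMod.natCast_val y).trans (ZMod.castHom_apply y).symm
  have h10 : (1 : ZMod m) ≠ 0 := by
    haveI : Fact (1 < m) := ⟨by omega⟩
    exact one_ne_zero
  have hk0 : ((k : ℕ) : ZMod m) ≠ 0 := by
    intro h0
    rw [ZMod.natCast_eq_zero_iff] at h0
    have := Nat.le_of_dvd (by omega) h0
    omega
  have hk2 : ((k : ℕ) : ZMod m) + ((k : ℕ) : ZMod m) = 0 := by
    rw [← Nat.cast_add, show k + k = m by omega, ZMod.natCast_self]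
  have hkk : (-((k : ℕ) : ZMod m)) = ((k : ℕ) : ZMod m) := by linear_combination -hk2
  have hφj : φ ((j : ZMod m)) = (j : ZMod 3) := map_natCast φ j
  have hφk : φ (((k : ℕ) : ZMod m)) = 0 := by
    rw [map_natCast, ZMod.natCast_eq_zero_iff]
    obtain ⟨t, ht⟩ := h6m
    exact ⟨t, by omega⟩
  have hj3 : (j : ZMod 3) ≠ 0 := by
    rw [Ne, ZMod.natCast_eq_zero_iff]; exact h3j
  have d1 : ∀ a : ZMod 3, a + 1 ≠ a - 1 ∧ a + 1 ≠ a ∧ a - 1 ≠ a := by decide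
  have d2 : ∀ a e : ZMod 3, e ≠ 0 → (a ≠ a + e ∧ a ≠ a - e ∧ a + e ≠ a - e) := by decide
  intro v
  rcases v with x | x | x
  · -- exterior vertex v_x : neighbors v_{x+1}, v_{x-1}, u_x
    refine key_balanced _ ℓ _ (Sum.inl (x+1)) (Sum.inl (x-1)) (Sum.inr (Sum.inl x)) ?_ ?_ ?_ ?_
    · intro w
      rcases w with y | y | y <;>
        simp only [genPappus, SimpleGraph.fromRel_adj, ne_eq, Sum.inl.injEq, Sum.inr.injEq,
          reduceCtorEq, or_false, false_or, and_true, true_and, iff_false, false_iff,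
          not_false_eq_true, and_false, false_and, or_self, not_true_eq_false, or_true, true_or]
      constructor
      · rintro ⟨hne, h | h⟩
        · exact Or.inl h
        · exact Or.inr (by linear_combination -h)
      · rintro (rfl | rfl)
        · exact ⟨fun h => h10 (by linear_combination -h), Or.inl rfl⟩
        · exact ⟨fun h => h10 (by linear_combination h), Or.inr (by ring)⟩
    · simp only [hℓ, val3]
      rw [map_add, map_sub, map_one]; exact (d1 (φ x)).1
    · simp only [hℓ, val3]
      rw [map_add, map_one]; exact (d1 (φ x)).2.1
    · simp only [hℓ, val3]
      rw [map_sub, map_one]; exact (d1 (φ x)).2.2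
  · -- middle vertex u_x : neighbors v_x, w_{x+j}, w_{x-j}
    refine key_balanced _ ℓ _ (Sum.inl x) (Sum.inr (Sum.inr (x + j)))
      (Sum.inr (Sum.inr (x - j))) ?_ ?_ ?_ ?_
    · intro w
      rcases w with y | y | y <;>
        simp only [genPappus, SimpleGraph.fromRel_adj, ne_eq, Sum.inl.injEq, Sum.inr.injEq,
          reduceCtorEq, or_false, false_or, and_true, true_and, iff_false, false_iff,
          not_false_eq_true, and_false, false_and, or_self, not_true_eq_false, or_true, true_or]
      exact eq_comm
    · simp only [hℓ, val3]
      rw [map_add, hφj]; exact (d2 (φ x) _ hj3).1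
    · simp only [hℓ, val3]
      rw [map_sub, hφj]; exact (d2 (φ x) _ hj3).2.1
    · simp only [hℓ, val3]
      rw [map_add, map_sub, hφj]; exact (d2 (φ x) _ hj3).2.2
  · -- interior vertex w_x : neighbors u_{x+j}, u_{x-j}, w_{x+k}
    refine key_balanced _ ℓ _ (Sum.inr (Sum.inl (x + j))) (Sum.inr (Sum.inl (x - j)))
      (Sum.inr (Sum.inr (x + k))) ?_ ?_ ?_ ?_
    · intro w
      rcases w with y | y | y <;>
        simp only [genPappus, SimpleGraph.fromRel_adj, ne_eq, Sum.inl.injEq, Sum.inr.injEq,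
          reduceCtorEq, or_false, false_or, and_true, true_and, iff_false, false_iff,
          not_false_eq_true, and_false, false_and, or_self, not_true_eq_false, or_true, true_or]
      · constructor
        · rintro (h | h)
          · exact Or.inr (by linear_combination -h)
          · exact Or.inl (by linear_combination -h)
        · rintro (h | h)
          · exact Or.inr (by linear_combination -h)
          · exact Or.inl (by linear_combination -h)
      · constructor
        · rintro ⟨hne, h | h⟩
          · exact h
          · have hy : y = x - (k : ZMod m) := by linear_combination -h
            rw [hy, sub_eq_add_neg, hkk]
        · rintro rfl
          exact ⟨fun h => hk0 (by linear_combination -h), Or.inl rfl⟩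
    · simp only [hℓ, val3]
      rw [map_add, map_sub, hφj]; exact (d2 (φ x) _ hj3).2.2
    · simp only [hℓ, val3]
      rw [map_add, map_add, hφj, hφk, add_zero]; exact (d2 (φ x) _ hj3).1.symm
    · simp only [hℓ, val3]
      rw [map_sub, map_add, hφj, hφk, add_zero]; exact (d2 (φ x) _ hj3).2.1.symm
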